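/- Let G = (V, E, s, r) be a countable directed graph. Then G is row-finite (every vertex receives at most finitely many edges, i.e., r⁻¹(v) is finite for every v ∈ V) if and only if every Cuntz–Krieger family for G on any complex Hilbert space is maximal, i.e., for every CK family (P, S) on H, every Hilbert space K, every isometry V : H → K, and every TCK family (Q, T) on K dilating (P, S) via V, the range of V is invariant under every Q_v, T_e and their adjoints. -/

import Mathlib

noncomputable section

open scoped ENNReal InnerProductSpace ComplexOrder
open ContinuousLinearMap

attribute [local instance] Classical.propDecidable

namespace GraphPaper

/-! ### Positivity of operators (without completeness assumptions) -/

/-- A bounded operator on a complex inner product space is positive if all the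
inner products `⟪T x, x⟫` are nonnegative (this forces them to be real). -/
def IsPosOp {W : Type*} [NormedAddCommGroup W] [InnerProductSpace ℂ W]
    (T : W →L[ℂ] W) : Prop :=
  ∀ x : W, 0 ≤ (inner ℂ (T x) x : ℂ)

/-! ### Toeplitz-Cuntz-Krieger families -/

variable {V E : Type*}

variable {H : Type*} [NormedAddCommGroup H] [InnerProductSpace ℂ H] [CompleteSpace H]

/-- The Toeplitz-Cuntz-Krieger relations for a family of projections `P` indexed by
vertices and partial isometries `S` indexed by edges. -/
def IsTCK (s r : E → V) (P : V → H →L[ℂ] H) (S : E → H →L[ℂ] H) : Prop :=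
  (∀ v, adjoint (P v) = P v) ∧
  (∀ v, P v ∘L P v = P v) ∧
  (∀ v w, v ≠ w → P v ∘L P w = 0) ∧
  (∀ e, adjoint (S e) ∘L S e = P (s e)) ∧
  (∀ (v : V) (F : Finset E), (∀ e ∈ F, r e = v) →
    IsPosOp (P v - ∑ e ∈ F, S e ∘L adjoint (S e)))

/-- A TCK family is a full Cuntz-Krieger family if for every vertex `v` receiving at
least one edge, the (unconditionally convergent) sum `∑_{r(e) = v} S_e S_e* x` is `P_v x`. -/
def IsFullCK (s r : E → V) (P : V → H →L[ℂ] H) (S : E → H →L[ℂ] H) : Prop :=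
  ∀ v : V, (∃ e, r e = v) → ∀ x : H,
    HasSum (fun e : {e : E // r e = v} => S e.1 (adjoint (S e.1) x)) (P v x)

/-- A TCK family is a Cuntz-Krieger family if `∑_{r(e) = v} S_e S_e* = P_v` for every
vertex `v` receiving finitely many and at least one edge. -/
def IsCK (s r : E → V) (P : V → H →L[ℂ] H) (S : E → H →L[ℂ] H) : Prop :=
  IsTCK s r P S ∧
  ∀ (v : V) (hfin : {e : E | r e = v}.Finite), hfin.toFinset.Nonempty →
    ∑ e ∈ hfin.toFinset, S e ∘L adjoint (S e) = P v

/-- The generators of a TCK family, indexed by vertices and edges. -/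
def gen (P : V → H →L[ℂ] H) (S : E → H →L[ℂ] H) : V ⊕ E → H →L[ℂ] H :=
  Sum.elim P S

variable {K : Type*} [NormedAddCommGroup K] [InnerProductSpace ℂ K] [CompleteSpace K]

/-- `(Q, T)` on `K` dilates `(P, S)` on `H` via the isometry `W : H → K`:
compressions of arbitrary nonempty words in the generators agree. -/
def Dilates (P : V → H →L[ℂ] H) (S : E → H →L[ℂ] H)
    (Q : V → K →L[ℂ] K) (T : E → K →L[ℂ] K) (W : H →L[ℂ] K) : Prop :=
  (∀ x : H, ‖W x‖ = ‖x‖) ∧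
  ∀ l : List (V ⊕ E), l ≠ [] →
    adjoint W ∘L (l.map (gen Q T)).prod ∘L W = (l.map (gen P S)).prod

/-! ### Finite paths -/

/-- A finite path `λ = e_n ⋯ e_1` in the directed graph determined by the source and
range maps `s r : E → V`, together with a base vertex `src` which is the source of the
path.  The edges are listed as `[e_n, …, e_1]`, with the consecutive compatibility
`s (e_{i+1}) = r (e_i)`, and (when the path is nonempty) `s (e_1) = src`.
A path with no edges is the length-zero path at the vertex `src`. -/
structure GPath (s r : E → V) : Type _ where
  src : V
  edges : List E
  chain : edges.Chain' fun e f => s e = r f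
  src_eq : ∀ e ∈ edges.getLast?, s e = src

variable {s r : E → V}

/-- The range of a finite path. -/
def GPath.rng (p : GPath s r) : V := ((p.edges.head?).map r).getD p.src

theorem GPath.ext' {p q : GPath s r} (h1 : p.src = q.src) (h2 : p.edges = q.edges) :
    p = q := by
  cases p; cases q; simp_all

/-- The length-zero path at a vertex. -/
def GPath.nil (s r : E → V) (v : V) : GPath s r where
  src := v
  edges := []
  chain := List.isChain_nil
  src_eq := by simp

/-- The tail of a path (removing the first, i.e. last-applied, edge). -/
def GPath.tail (p : GPath s r) : GPath s r where
  src := p.src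
  edges := p.edges.tail
  chain := p.chain.tail
  src_eq := by
    intro f hf
    apply p.src_eq
    rcases hp : p.edges with - | ⟨a, t⟩
    · rw [hp] at hf; simp at hf
    · rw [hp] at hf
      rcases t with - | ⟨b, t'⟩
      · simp at hf
      · simpa [List.getLast?_cons_cons] using hf

/-- The operator `T_λ = T_{e_n} ⋯ T_{e_1}` associated to a finite path `λ`;
for the length-zero path at `v` it is `P_v`. -/
def pathOp (P : V → H →L[ℂ] H) (S : E → H →L[ℂ] H) (p : GPath s r) : H →L[ℂ] H :=
  if p.edges.isEmpty then P p.src else (p.edges.map S).prod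

/-- Paths with source `v`. -/
abbrev SPath (s r : E → V) (v : V) : Type _ := {p : GPath s r // p.src = v}

/-! ### The model space and the model TCK family -/

/-- The model Hilbert space `H_{G,v} = ℓ²` of the set of paths with source `v`. -/
abbrev HGv (s r : E → V) (v : V) : Type _ := lp (fun _ : SPath s r v => ℂ) 2

/-- The basis vector `ξ_λ` of the model space. -/
def xi {v : V} (p : SPath s r v) : HGv s r v := lp.single 2 p 1

/-- Pulling back a function `x : ι → ℂ` along a partially defined map `f`. -/
def pullFun {ι κ : Type*} (f : κ → Option ι) (x : ι → ℂ) (k : κ) : ℂ :=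
  ((f k).map x).getD 0

theorem pullFun_core {ι κ : Type*} (f : κ → Option ι)
    (hf : ∀ ⦃k k' : κ⦄ ⦃i : ι⦄, f k = some i → f k' = some i → k = k')
    (x : lp (fun _ : ι => ℂ) 2) :
    Memℓp (pullFun f ⇑x) 2 ∧
      ∑' k : κ, ‖pullFun f ⇑x k‖ ^ (2 : ℝ) ≤ ∑' i : ι, ‖x i‖ ^ (2 : ℝ) := by
  classical
  have hp : 0 < (2 : ℝ≥0∞).toReal := by norm_num
  have hx : Summable fun i : ι => ‖x i‖ ^ (2 : ℝ) := by
    have := lp.memℓp x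
    rw [memℓp_gen_iff hp] at this
    simpa using this
  set σ : Set κ := {k : κ | (f k).isSome} with hσ
  have hmem : ∀ k : σ, ∃ i, f (k : κ) = some i := fun k => Option.isSome_iff_exists.mp k.2
  set h : σ → ι := fun k => (f (k : κ)).get k.2 with hh
  have hfk : ∀ k : σ, f (k : κ) = some (h k) := fun k => (Option.some_get k.2).symm
  have hinj : Function.Injective h := by
    intro a b hab
    have ha := hfk a
    have hb := hfk b
    rw [hab] at ha
    exact Subtype.ext (hf ha hb)
  have hval : ∀ k : σ, pullFun f ⇑x (k : κ) = x (h k) := by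
    intro k
    simp [pullFun, hfk k]
  set g : κ → ℝ := fun k => ‖pullFun f ⇑x k‖ ^ (2 : ℝ) with hg
  have hsupp : Function.support g ⊆ σ := by
    intro k hk
    by_contra hks
    have : f k = none := by
      rw [hσ] at hks
      simpa [Option.isNone_iff_eq_none, Option.not_isSome_iff_eq_none] using hks
    apply hk
    simp [hg, pullFun, this, Real.zero_rpow (by norm_num : (2:ℝ) ≠ 0)]
  have hcomp : (g ∘ (Subtype.val : σ → κ)) = (fun i => ‖x i‖ ^ (2 : ℝ)) ∘ h := by
    funext k
    simp [hg, Function.comp, hval k]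
  have hsummσ : Summable (g ∘ (Subtype.val : σ → κ)) := by
    rw [hcomp]; exact hx.comp_injective hinj
  have hsumm : Summable g := by
    obtain ⟨a, ha⟩ := hsummσ
    exact ⟨a, (hasSum_subtype_iff_of_support_subset hsupp).mp ha⟩
  constructor
  · apply memℓp_gen
    have : (fun k => ‖pullFun f ⇑x k‖ ^ (2 : ℝ≥0∞).toReal) = g := by
      funext k; simp [hg]
    rw [this]
    exact hsumm
  · have h1 : ∑' k : κ, g k = ∑' k : σ, g k := (tsum_subtype_eq_of_support_subset hsupp).symm
    have h2 : ∑' k : σ, g k ≤ ∑' i : ι, ‖x i‖ ^ (2 : ℝ) := by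
      have := tsum_comp_le_tsum_of_inj hx
        (fun i => Real.rpow_nonneg (norm_nonneg _) _) hinj
      calc ∑' k : σ, g k = ∑' k : σ, ((fun i => ‖x i‖ ^ (2 : ℝ)) ∘ h) k := by
            rw [← hcomp]; rfl
        _ ≤ ∑' i : ι, ‖x i‖ ^ (2 : ℝ) := this
    exact h1.trans_le h2

/-- The bounded operator `lp² ι → lp² κ` induced by a partially defined injection. -/
def pullCLM {ι κ : Type*} (f : κ → Option ι)
    (hf : ∀ ⦃k k' : κ⦄ ⦃i : ι⦄, f k = some i → f k' = some i → k = k') :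
    lp (fun _ : ι => ℂ) 2 →L[ℂ] lp (fun _ : κ => ℂ) 2 :=
  LinearMap.mkContinuous
    { toFun := fun x => ⟨pullFun f ⇑x, (pullFun_core f hf x).1⟩
      map_add' := by
        intro x y
        apply lp.ext
        funext k
        show pullFun f ⇑(x + y) k = pullFun f ⇑x k + pullFun f ⇑y k
        rw [lp.coeFn_add]
        unfold pullFun
        cases f k <;> simp
      map_smul' := by
        intro c x
        apply lp.ext
        funext k
        show pullFun f ⇑(c • x) k = c • pullFun f ⇑x k
        rw [lp.coeFn_smul]
        unfold pullFun
        cases f k <;> simp }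
    1
    (by
      intro x
      have hp : 0 < (2 : ℝ≥0∞).toReal := by norm_num
      rw [one_mul]
      set y : lp (fun _ : κ => ℂ) 2 := ⟨pullFun f ⇑x, (pullFun_core f hf x).1⟩ with hy
      show ‖y‖ ≤ ‖x‖
      have hle := (pullFun_core f hf x).2
      have h1 : ‖y‖ ^ (2:ℝ) = ∑' k : κ, ‖pullFun f ⇑x k‖ ^ (2 : ℝ) := by
        simpa using lp.norm_rpow_eq_tsum hp y
      have h2 : ‖x‖ ^ (2:ℝ) = ∑' i : ι, ‖x i‖ ^ (2 : ℝ) := by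
        simpa using lp.norm_rpow_eq_tsum hp x
      have key : ‖y‖ ^ (2:ℝ) ≤ ‖x‖ ^ (2:ℝ) := by rw [h1, h2]; exact hle
      have k2 : ‖y‖ ^ (2:ℕ) ≤ ‖x‖ ^ (2:ℕ) := by
        rw [← Real.rpow_natCast ‖y‖ 2, ← Real.rpow_natCast ‖x‖ 2]
        exact_mod_cast key
      have hs := Real.sqrt_le_sqrt k2
      rwa [Real.sqrt_sq (norm_nonneg y), Real.sqrt_sq (norm_nonneg x)] at hs)

/-- Decoding map for the model projection at `w`. -/
def decodeP (v w : V) (p : SPath s r v) : Option (SPath s r v) :=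
  if p.1.rng = w then some p else none

/-- Decoding map for the model partial isometry at `e`. -/
def decodeS (v : V) (e : E) (p : SPath s r v) : Option (SPath s r v) :=
  if p.1.edges.head? = some e then some ⟨p.1.tail, p.2⟩ else none

theorem decodeP_inj (v w : V) :
    ∀ ⦃k k' : SPath s r v⦄ ⦃i : SPath s r v⦄,
      decodeP v w k = some i → decodeP v w k' = some i → k = k' := by
  intro k k' i h1 h2
  unfold decodeP at h1 h2
  split_ifs at h1 h2 <;> simp_all

theorem decodeS_inj (v : V) (e : E) :
    ∀ ⦃k k' : SPath s r v⦄ ⦃i : SPath s r v⦄,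
      decodeS v e k = some i → decodeS v e k' = some i → k = k' := by
  intro k k' i h1 h2
  unfold decodeS at h1 h2
  split_ifs at h1 h2 with he1 he2
  have hi1 := Option.some.inj h1
  have hi2 := Option.some.inj h2
  apply Subtype.ext
  apply GPath.ext'
  · rw [k.2, k'.2]
  · obtain ⟨t1, ht1⟩ := List.head?_eq_some_iff.mp he1
    obtain ⟨t2, ht2⟩ := List.head?_eq_some_iff.mp he2
    have e1 : k.1.tail.edges = t1 := by simp [GPath.tail, ht1]
    have e2 : k'.1.tail.edges = t2 := by simp [GPath.tail, ht2]
    have : k.1.tail.edges = k'.1.tail.edges := by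
      rw [show k.1.tail = i.1 from congrArg Subtype.val hi1,
        show k'.1.tail = i.1 from congrArg Subtype.val hi2]
    rw [ht1, ht2]
    rw [e1, e2] at this
    rw [this]

/-- The model projection `P^v_w` on `H_{G,v}`: the orthogonal projection onto the span
of the basis vectors `ξ_λ` with `r(λ) = w`. -/
def modelP (s r : E → V) (v w : V) : HGv s r v →L[ℂ] HGv s r v :=
  pullCLM (decodeP v w) (decodeP_inj v w)

/-- The model partial isometry `S^v_e` on `H_{G,v}`: it maps `ξ_λ` to `ξ_{eλ}`
when `s(e) = r(λ)`, and to `0` otherwise. -/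
def modelS (s r : E → V) (v : V) (e : E) : HGv s r v →L[ℂ] HGv s r v :=
  pullCLM (decodeS v e) (decodeS_inj v e)

/-! ### Reducing subspaces, wandering spaces, maximality -/

universe u

/-- A subspace is reducing for a family of operators if it is invariant under all of them
and all their adjoints. -/
def Reduces (Q : V → H →L[ℂ] H) (T : E → H →L[ℂ] H) (M : Submodule ℂ H) : Prop :=
  (∀ w : V, ∀ x ∈ M, Q w x ∈ M ∧ adjoint (Q w) x ∈ M) ∧
  (∀ e : E, ∀ x ∈ M, T e x ∈ M ∧ adjoint (T e) x ∈ M)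

/-- The wandering space `W_v = {x | Q_v x = x, T_e* x = 0 for all e ∈ r⁻¹(v)}`. -/
def wandering (s r : E → V) (Q : V → H →L[ℂ] H) (T : E → H →L[ℂ] H) (v : V) :
    Submodule ℂ H where
  carrier := {x : H | Q v x = x ∧ ∀ e : E, r e = v → adjoint (T e) x = 0}
  add_mem' := by
    intro a b ha hb
    refine ⟨?_, fun e he => ?_⟩
    · rw [map_add, ha.1, hb.1]
    · rw [map_add, ha.2 e he, hb.2 e he, add_zero]
  zero_mem' := ⟨map_zero _, fun e _ => map_zero _⟩
  smul_mem' := by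
    intro c x hx
    refine ⟨?_, fun e he => ?_⟩
    · rw [map_smul, hx.1]
    · rw [map_smul, hx.2 e he, smul_zero]

/-- The restriction of a TCK family to a reducing subspace `M` is a full Cuntz-Krieger
family (expressed via the action on vectors of `M` in the ambient space). -/
def IsFullCKOn (s r : E → V) (Q : V → H →L[ℂ] H) (T : E → H →L[ℂ] H)
    (M : Submodule ℂ H) : Prop :=
  ∀ v : V, (∃ e, r e = v) → ∀ x ∈ M,
    HasSum (fun e : {e : E // r e = v} => T e.1 (adjoint (T e.1) x)) (Q v x)

/-- A TCK family is maximal if for every TCK family dilating it, the range of the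
dilation isometry is reducing. -/
def IsMaxTCK {V E : Type*} (s r : E → V) {H : Type u} [NormedAddCommGroup H]
    [InnerProductSpace ℂ H] [CompleteSpace H]
    (P : V → H →L[ℂ] H) (S : E → H →L[ℂ] H) : Prop :=
  ∀ (K : Type u) [NormedAddCommGroup K] [InnerProductSpace ℂ K] [CompleteSpace K],
    ∀ (Q : V → K →L[ℂ] K) (T : E → K →L[ℂ] K) (W : H →L[ℂ] K),
      IsTCK s r Q T → Dilates P S Q T W →
        ∀ (g : V ⊕ E) (x : H),
          gen Q T g (W x) ∈ Set.range W ∧ adjoint (gen Q T g) (W x) ∈ Set.range W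

end GraphPaper

namespace GraphPaper

/-! ### Auxiliary toolkit: option maps and the operators they induce on `ℓ²` -/

section OptionMaps

variable {ι κ μ ι' κ' μ' : Type*}

/-- The injectivity condition used by `pullCLM`. -/
def Inj2 (f : κ → Option ι) : Prop :=
  ∀ ⦃k k' : κ⦄ ⦃i : ι⦄, f k = some i → f k' = some i → k = k'

/-- Composition of partial maps, in the order matching `∘L` of the induced operators. -/
def ocomp (f : κ → Option ι) (g : ι → Option μ) : κ → Option μ :=
  fun k => (f k).bind g

theorem ocomp_inj {f : κ → Option ι} {g : ι → Option μ} (hf : Inj2 f) (hg : Inj2 g) :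
    Inj2 (ocomp f g) := by
  intro k k' m h1 h2
  rcases h1' : f k with _ | i
  · simp [ocomp, h1'] at h1
  rcases h2' : f k' with _ | i'
  · simp [ocomp, h2'] at h2
  simp only [ocomp, h1', h2', Option.bind_some] at h1 h2
  exact hf h1' ((hg h1 h2) ▸ h2')

theorem oid_inj : Inj2 (fun k : κ => some k) := by
  intro k k' i h1 h2
  rw [Option.some.inj h1, Option.some.inj h2]

/-- A (choice-based) partial inverse for a partial map. -/
def pinv (f : κ → Option ι) : ι → Option κ := fun i =>
  if h : ∃ k, f k = some i then some h.choose else none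

theorem pinv_inj (f : κ → Option ι) : Inj2 (pinv f) := by
  intro i i' k h1 h2
  unfold pinv at h1 h2
  split_ifs at h1 h2 with ha hb
  have s1 := ha.choose_spec
  have s2 := hb.choose_spec
  rw [Option.some.inj h1] at s1
  rw [Option.some.inj h2] at s2
  rw [s1] at s2
  exact Option.some.inj s2

theorem pinv_eq_some_iff {f : κ → Option ι} (hf : Inj2 f) {i : ι} {k : κ} :
    pinv f i = some k ↔ f k = some i := by
  constructor
  · intro h
    unfold pinv at h
    split_ifs at h with ha
    have := ha.choose_spec
    rwa [Option.some.inj h] at this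
  · intro h
    unfold pinv
    rw [dif_pos ⟨k, h⟩]
    exact congrArg some (hf (⟨k, h⟩ : ∃ k, f k = some i).choose_spec h)

theorem pinv_eq_none_iff {f : κ → Option ι} {i : ι} :
    pinv f i = none ↔ ∀ k, f k ≠ some i := by
  unfold pinv
  split_ifs with ha
  · exact iff_of_false (by simp) (fun h => h _ ha.choose_spec)
  · exact iff_of_true rfl (fun k hk => ha ⟨k, hk⟩)

theorem pinv_pinv {f : κ → Option ι} (hf : Inj2 f) : pinv (pinv f) = f := by
  funext k
  rcases h : f k with _ | i
  · refine pinv_eq_none_iff.mpr fun i hi => ?_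
    rw [(pinv_eq_some_iff hf).mp hi] at h
    exact nomatch h
  · exact (pinv_eq_some_iff (pinv_inj f)).mpr ((pinv_eq_some_iff hf).mpr h)

/-- Diagonal partial map determined by a predicate. -/
def dmap (c : κ → Prop) : κ → Option κ := fun k => if c k then some k else none

theorem dmap_inj (c : κ → Prop) : Inj2 (dmap c) := by
  intro k k' i h1 h2
  unfold dmap at h1 h2
  split_ifs at h1 h2
  rw [Option.some.inj h1, Option.some.inj h2]

theorem dmap_congr {c d : κ → Prop} (h : ∀ k, c k ↔ d k) : dmap c = dmap d := by
  have : c = d := funext fun k => propext (h k)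
  rw [this]

theorem pinv_dmap (c : κ → Prop) : pinv (dmap c) = dmap c := by
  funext k
  by_cases hc : c k
  · rw [show dmap c k = some k from if_pos hc]
    exact (pinv_eq_some_iff (dmap_inj c)).mpr (if_pos hc)
  · rw [show dmap c k = none from if_neg hc]
    refine pinv_eq_none_iff.mpr fun k' hk' => ?_
    unfold dmap at hk'
    split_ifs at hk' with hc'
    cases Option.some.inj hk'
    exact hc hc'

theorem ocomp_dmap (c d : κ → Prop) :
    ocomp (dmap c) (dmap d) = dmap fun k => c k ∧ d k := by
  funext k
  unfold ocomp dmap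
  by_cases hc : c k <;> by_cases hd : d k <;> simp [hc, hd]

/-- Conjugation of a partial map by equivalences of the index types. -/
def cmap (a : κ' ≃ κ) (b : ι' ≃ ι) (m : κ → Option ι) : κ' → Option ι' :=
  fun k => (m (a k)).map b.symm

theorem cmap_eq_some_iff {a : κ' ≃ κ} {b : ι' ≃ ι} {m : κ → Option ι} {k : κ'} {i : ι'} :
    cmap a b m k = some i ↔ m (a k) = some (b i) := by
  unfold cmap
  rcases h : m (a k) with _ | j
  · simp
  · simp only [Option.map_some, Option.some.injEq]
    constructor
    · rintro rfl; rw [Equiv.apply_symm_apply]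
    · rintro rfl; rw [Equiv.symm_apply_apply]

theorem cmap_inj (a : κ' ≃ κ) (b : ι' ≃ ι) {m : κ → Option ι} (hm : Inj2 m) :
    Inj2 (cmap a b m) := by
  intro k k' i h1 h2
  rw [cmap_eq_some_iff] at h1 h2
  exact a.injective (hm h1 h2)

theorem cmap_ocomp (a : κ' ≃ κ) (b : ι' ≃ ι) (c : μ' ≃ μ)
    (m : κ → Option ι) (m' : ι → Option μ) :
    cmap a c (ocomp m m') = ocomp (cmap a b m) (cmap b c m') := by
  funext k
  unfold cmap ocomp
  rcases h : m (a k) with _ | i <;> simp [h]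

theorem cmap_pinv (a : κ' ≃ κ) (b : ι' ≃ ι) {m : κ → Option ι} (hm : Inj2 m) :
    pinv (cmap a b m) = cmap b a (pinv m) := by
  funext i
  rcases h : pinv m (b i) with _ | k
  · have hnone := pinv_eq_none_iff.mp h
    have : cmap b a (pinv m) i = none := by unfold cmap; rw [h]; rfl
    rw [this]
    refine pinv_eq_none_iff.mpr fun k' hk' => ?_
    exact hnone (a k') (cmap_eq_some_iff.mp hk')
  · have : cmap b a (pinv m) i = some (a.symm k) := by unfold cmap; rw [h]; rfl
    rw [this]
    refine (pinv_eq_some_iff (cmap_inj a b hm)).mpr ?_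
    rw [cmap_eq_some_iff, Equiv.apply_symm_apply]
    exact (pinv_eq_some_iff hm).mp h

theorem cmap_dmap (a : κ' ≃ κ) (c : κ → Prop) :
    cmap a a (dmap c) = dmap (fun k => c (a k)) := by
  funext k
  unfold cmap dmap
  by_cases hc : c (a k) <;> simp [hc]

theorem cmap_oid (a : κ' ≃ κ) : cmap a a (fun k => some k) = fun k => some k := by
  funext k
  unfold cmap
  simp

end OptionMaps

section PullOps

variable {ι κ μ : Type*}

theorem pullCLM_apply {f : κ → Option ι} (hf : Inj2 f) (x : lp (fun _ : ι => ℂ) 2) (k : κ) :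
    (pullCLM f hf x) k = ((f k).map ⇑x).getD 0 := rfl

theorem pullCLM_comp {f : κ → Option ι} {g : ι → Option μ} (hf : Inj2 f) (hg : Inj2 g) :
    pullCLM f hf ∘L pullCLM g hg = pullCLM (ocomp f g) (ocomp_inj hf hg) := by
  apply ContinuousLinearMap.ext; intro x
  apply lp.ext; funext k
  show ((f k).map ⇑(pullCLM g hg x)).getD 0 = ((ocomp f g k).map ⇑x).getD 0
  rcases h : f k with _ | i
  · simp [ocomp, h]
  · simp only [ocomp, h, Option.map_some, Option.bind_some]
    rfl

theorem pullCLM_ext {f g : κ → Option ι} (hf : Inj2 f) (hg : Inj2 g) (h : f = g) :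
    pullCLM f hf = pullCLM g hg := by
  subst h; rfl

theorem pullCLM_oid : pullCLM (fun k : κ => some k) oid_inj = 1 := by
  apply ContinuousLinearMap.ext; intro x
  apply lp.ext; funext k
  rfl

theorem pullCLM_obot {hf : Inj2 (fun _ : κ => (none : Option ι))} :
    pullCLM (fun _ : κ => (none : Option ι)) hf = 0 := by
  apply ContinuousLinearMap.ext; intro x
  apply lp.ext; funext k
  rfl

theorem adjoint_pullCLM {f : κ → Option ι} (hf : Inj2 f) :
    adjoint (pullCLM f hf) = pullCLM (pinv f) (pinv_inj f) := by
  symm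
  rw [ContinuousLinearMap.eq_adjoint_iff]
  intro x y
  rw [lp.inner_eq_tsum, lp.inner_eq_tsum]
  set G : ι → ℂ := fun i => ((pinv f i).map fun k => (starRingEnd ℂ) (x k) * y i).getD 0
    with hG
  set F : κ → ℂ := fun k => ((f k).map fun i => (starRingEnd ℂ) (x k) * y i).getD 0 with hF
  have hGc : ∀ i : ι, (inner ℂ ((pullCLM (pinv f) (pinv_inj f) x) i) (y i) : ℂ) = G i := by
    intro i
    rw [RCLike.inner_apply, pullCLM_apply]
    simp only [hG]
    rcases h : pinv f i with _ | k <;> simp [h, mul_comm]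
  have hFc : ∀ k : κ, (inner ℂ (x k) ((pullCLM f hf y) k) : ℂ) = F k := by
    intro k
    rw [RCLike.inner_apply, pullCLM_apply]
    simp only [hF]
    rcases h : f k with _ | i <;> simp [h, mul_comm]
  rw [tsum_congr hGc, tsum_congr hFc]
  have hsome : ∀ i0 : Function.support G, (pinv f i0.1).isSome := by
    rintro ⟨i0, hi0⟩
    rcases h : pinv f i0 with _ | k
    · exfalso; apply hi0; simp only [hG]; rw [h]; rfl
    · rfl
  refine (tsum_eq_tsum_of_ne_zero_bij (fun i0 => (pinv f i0.1).get (hsome i0)) ?_ ?_ ?_).symm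
  · rintro ⟨i0, hi0⟩ ⟨i1, hi1⟩ h
    have e0 : pinv f i0 = some ((pinv f i0).get (hsome ⟨i0, hi0⟩)) := (Option.some_get _).symm
    have e1 : pinv f i1 = some ((pinv f i1).get (hsome ⟨i1, hi1⟩)) := (Option.some_get _).symm
    exact Subtype.ext (pinv_inj f (e0.trans (congrArg some h)) e1)
  · intro k hk
    rcases h : f k with _ | i
    · exfalso; apply hk; simp only [hF]; rw [h]; rfl
    · have hpi : pinv f i = some k := (pinv_eq_some_iff hf).mpr h
      have hGF : G i = F k := by
        simp only [hG, hF]; rw [h, hpi]; simp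
      have hmem : i ∈ Function.support G := by
        intro h0
        rw [hGF] at h0
        exact hk h0
      refine ⟨⟨i, hmem⟩, ?_⟩
      show (pinv f i).get _ = k
      simp only [hpi, Option.get_some]
  · rintro ⟨i0, hi0⟩
    set k := (pinv f i0).get (hsome ⟨i0, hi0⟩) with hk
    have e0 : pinv f i0 = some k := (Option.some_get _).symm
    have hfk : f k = some i0 := (pinv_eq_some_iff hf).mp e0
    show F k = G i0
    simp only [hF, hG]
    rw [hfk, e0]
    simp

theorem sum_pullCLM_dmap {A : Type*} (F : Finset A) (c : A → κ → Prop)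
    (hdisj : ∀ a ∈ F, ∀ b ∈ F, a ≠ b → ∀ k, c a k → ¬ c b k) :
    ∑ a ∈ F, pullCLM (dmap (c a)) (dmap_inj _) =
      pullCLM (dmap (fun k => ∃ a ∈ F, c a k)) (dmap_inj _) := by
  apply ContinuousLinearMap.ext; intro x
  apply lp.ext; funext k
  have hcoe : ∀ (G : Finset A),
      (((∑ a ∈ G, pullCLM (dmap (c a)) (dmap_inj _)) x) k : ℂ)
        = ∑ a ∈ G, ((pullCLM (dmap (c a)) (dmap_inj _)) x) k := by
    intro G
    rw [ContinuousLinearMap.sum_apply]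
    induction G using Finset.induction_on with
    | empty => simp
    | insert _ _ hnotmem ih =>
      rw [Finset.sum_insert hnotmem, Finset.sum_insert hnotmem, lp.coeFn_add]
      simp only [Pi.add_apply]
      rw [ih]
  rw [hcoe]
  have hterm : ∀ a, ((pullCLM (dmap (c a)) (dmap_inj _)) x) k
      = if c a k then x k else 0 := by
    intro a
    rw [pullCLM_apply]
    unfold dmap
    by_cases h : c a k <;> simp [h]
  have hrhs : ((pullCLM (dmap (fun k => ∃ a ∈ F, c a k)) (dmap_inj _)) x) k
      = if (∃ a ∈ F, c a k) then x k else 0 := by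
    rw [pullCLM_apply]
    unfold dmap
    by_cases h : (∃ a ∈ F, c a k) <;> simp [h]
  rw [hrhs]
  by_cases hex : ∃ a ∈ F, c a k
  · obtain ⟨a0, ha0F, ha0⟩ := hex
    rw [if_pos ⟨a0, ha0F, ha0⟩]
    rw [Finset.sum_eq_single_of_mem a0 ha0F]
    · rw [hterm, if_pos ha0]
    · intro b hb hba
      rw [hterm, if_neg (hdisj a0 ha0F b hb (fun h => hba (h ▸ rfl)) k ha0)]
  · rw [if_neg hex]
    push_neg at hex
    refine Finset.sum_eq_zero fun a ha => ?_
    rw [hterm, if_neg (hex a ha)]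

theorem sub_pullCLM_dmap (c d : κ → Prop) (h : ∀ k, d k → c k) :
    pullCLM (dmap c) (dmap_inj c) - pullCLM (dmap d) (dmap_inj d) =
      pullCLM (dmap fun k => c k ∧ ¬ d k) (dmap_inj _) := by
  apply ContinuousLinearMap.ext; intro x
  apply lp.ext; funext k
  rw [ContinuousLinearMap.sub_apply, lp.coeFn_sub]
  simp only [Pi.sub_apply]
  rw [pullCLM_apply, pullCLM_apply, pullCLM_apply]
  unfold dmap
  by_cases hd : d k
  · simp [hd, h k hd]
  · by_cases hc : c k <;> simp [hc, hd]

theorem inner_self_nonneg'' {W : Type*} [NormedAddCommGroup W] [InnerProductSpace ℂ W]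
    (y : W) : (0:ℂ) ≤ inner ℂ y y := by
  rw [Complex.le_def]
  refine ⟨by simpa using inner_self_nonneg (𝕜 := ℂ) (x := y), ?_⟩
  have := inner_self_im (𝕜 := ℂ) (x := y)
  simp only [Complex.zero_im]
  exact this.symm ▸ rfl

theorem isPosOp_pullCLM_dmap (c : κ → Prop) :
    IsPosOp (pullCLM (dmap c) (dmap_inj c)) := by
  intro x
  set A := pullCLM (dmap c) (dmap_inj c) with hA
  have hAA : A ∘L A = A := by
    rw [hA, pullCLM_comp, pullCLM_ext (ocomp_inj (dmap_inj c) (dmap_inj c)) (dmap_inj c)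
      ((ocomp_dmap c c).trans (dmap_congr fun k => and_self_iff))]
  have hAadj : adjoint A = A :=
    (adjoint_pullCLM (dmap_inj c)).trans (pullCLM_ext (pinv_inj _) (dmap_inj c) (pinv_dmap c))
  have h1 : A x = A (A x) := by
    conv_lhs => rw [← hAA]
    rfl
  have key : (inner ℂ (A x) x : ℂ) = inner ℂ (A x) (A x) :=
    calc (inner ℂ (A x) x : ℂ) = inner ℂ (A (A x)) x := by rw [← h1]
    _ = inner ℂ ((adjoint A) (A x)) x := by rw [hAadj]
    _ = inner ℂ (A x) (A x) := ContinuousLinearMap.adjoint_inner_left A x (A x)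
  rw [key]
  exact inner_self_nonneg'' (A x)

end PullOps

section Paths

variable {V E : Type*} {s r : E → V}

theorem GPath.rng_nil_edges {p : GPath s r} (h : p.edges = []) : p.rng = p.src := by
  simp [GPath.rng, h]

theorem GPath.rng_of_head {p : GPath s r} {e : E} (h : p.edges.head? = some e) :
    p.rng = r e := by
  simp [GPath.rng, h]

/-- Prepend an edge to a path. -/
def GPath.cons (e : E) (p : GPath s r) (h : s e = p.rng) : GPath s r where
  src := p.src
  edges := e :: p.edges
  chain := by
    have hc := p.chain
    rcases hp : p.edges with - | ⟨a, t⟩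
    · exact List.isChain_singleton _
    · rw [hp] at hc
      refine List.isChain_cons_cons.mpr ⟨?_, hc⟩
      rw [h]
      simp [GPath.rng, hp]
  src_eq := by
    intro x hx
    rcases hp : p.edges with - | ⟨a, t⟩
    · rw [hp] at hx
      simp at hx
      subst hx
      rw [h]
      simp [GPath.rng, hp]
    · rw [hp] at hx
      rw [List.getLast?_cons_cons] at hx
      exact p.src_eq x (by rw [hp]; exact hx)

theorem GPath.tail_cons (e : E) (p : GPath s r) (h : s e = p.rng) :
    (GPath.cons e p h).tail = p :=
  GPath.ext' rfl rfl

theorem GPath.cons_tail {p : GPath s r} {e : E} (hp : p.edges.head? = some e)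
    (h : s e = p.tail.rng) : GPath.cons e p.tail h = p := by
  obtain ⟨t, ht⟩ := List.head?_eq_some_iff.mp hp
  refine GPath.ext' rfl ?_
  show e :: p.edges.tail = p.edges
  rw [ht]
  rfl

theorem GPath.head_rng_tail {p : GPath s r} {e : E} (hp : p.edges.head? = some e) :
    s e = p.tail.rng := by
  obtain ⟨t, ht⟩ := List.head?_eq_some_iff.mp hp
  rcases t with - | ⟨a, t'⟩
  · have h1 : p.tail.rng = p.src := by
      simp [GPath.tail, GPath.rng, ht]
    rw [h1]
    exact p.src_eq e (by rw [ht]; simp)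
  · have hc := p.chain
    rw [ht] at hc
    have h1 := (List.isChain_cons_cons.mp hc).1
    have h2 : p.tail.rng = r a := by simp [GPath.tail, GPath.rng, ht]
    rw [h2]
    exact h1

variable (v : V)

theorem decodeP_eq_dmap (w : V) :
    decodeP (s := s) (r := r) v w = dmap (fun p : SPath s r v => p.1.rng = w) := rfl

theorem pinv_decodeP (w : V) :
    pinv (decodeP (s := s) (r := r) v w) = decodeP v w := by
  rw [decodeP_eq_dmap, pinv_dmap]

theorem decodeS_cons (e : E) (p : SPath s r v) (h : s e = p.1.rng) :
    decodeS v e ⟨GPath.cons e p.1 h, p.2⟩ = some p := by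
  unfold decodeS
  split_ifs with hc
  · exact congrArg some (Subtype.ext (GPath.tail_cons e p.1 h))
  · exact absurd rfl hc

theorem pinv_decodeS (e : E) :
    pinv (decodeS (s := s) (r := r) v e) = fun p : SPath s r v =>
      if h : s e = p.1.rng then some ⟨GPath.cons e p.1 h, p.2⟩ else none := by
  funext p
  by_cases h : s e = p.1.rng
  · rw [dif_pos h]
    exact (pinv_eq_some_iff (decodeS_inj v e)).mpr (decodeS_cons v e p h)
  · rw [dif_neg h]
    refine pinv_eq_none_iff.mpr fun q hq => ?_
    unfold decodeS at hq
    split_ifs at hq with hh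
    cases Option.some.inj hq
    exact h (GPath.head_rng_tail hh)

theorem ocomp_pinv_decodeS (e : E) :
    ocomp (pinv (decodeS (s := s) (r := r) v e)) (decodeS v e) = decodeP v (s e) := by
  funext p
  unfold ocomp decodeP
  rw [pinv_decodeS]
  dsimp only
  by_cases h : s e = p.1.rng
  · rw [dif_pos h, if_pos h.symm]
    exact decodeS_cons v e p h
  · rw [dif_neg h, if_neg fun hh => h hh.symm]
    rfl

theorem ocomp_decodeS_pinv (e : E) :
    ocomp (decodeS (s := s) (r := r) v e) (pinv (decodeS v e)) =
      dmap (fun p : SPath s r v => p.1.edges.head? = some e) := by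
  funext p
  unfold ocomp dmap
  by_cases h : p.1.edges.head? = some e
  · rw [if_pos h]
    have h1 : decodeS (s := s) (r := r) v e p = some ⟨p.1.tail, p.2⟩ := by
      unfold decodeS
      rw [if_pos h]
    rw [h1]
    show pinv (decodeS v e) ⟨p.1.tail, p.2⟩ = some p
    rw [pinv_decodeS]
    dsimp only
    rw [dif_pos (GPath.head_rng_tail h)]
    exact congrArg some (Subtype.ext (GPath.cons_tail h (GPath.head_rng_tail h)))
  · rw [if_neg h]
    have h1 : decodeS (s := s) (r := r) v e p = none := by
      unfold decodeS
      rw [if_neg h]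
    rw [h1]
    rfl

end Paths

section ModelFamily

variable {V E : Type*} {s r : E → V} (v : V) {J : Type*}

/-- The conjugated model projection on `ℓ²(J)` for an enumeration `e0` of the paths. -/
def cmodelP (e0 : J ≃ SPath s r v) (w : V) :
    lp (fun _ : J => ℂ) 2 →L[ℂ] lp (fun _ : J => ℂ) 2 :=
  pullCLM (cmap e0 e0 (decodeP v w)) (cmap_inj e0 e0 (decodeP_inj v w))

/-- The conjugated model partial isometry on `ℓ²(J)`. -/
def cmodelS (e0 : J ≃ SPath s r v) (e : E) :
    lp (fun _ : J => ℂ) 2 →L[ℂ] lp (fun _ : J => ℂ) 2 :=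
  pullCLM (cmap e0 e0 (decodeS v e)) (cmap_inj e0 e0 (decodeS_inj v e))

theorem cmodelSS (e0 : J ≃ SPath s r v) (e : E) :
    cmodelS v e0 e ∘L adjoint (cmodelS v e0 e) =
      pullCLM (dmap fun k : J => (e0 k).1.edges.head? = some e) (dmap_inj _) := by
  unfold cmodelS
  rw [adjoint_pullCLM, pullCLM_comp]
  refine pullCLM_ext _ _ ?_
  rw [cmap_pinv e0 e0 (decodeS_inj v e), ← cmap_ocomp e0 e0 e0, ocomp_decodeS_pinv, cmap_dmap]

theorem cmodelP_eq (e0 : J ≃ SPath s r v) (w : V) :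
    cmodelP v e0 w = pullCLM (dmap fun k : J => (e0 k).1.rng = w) (dmap_inj _) := by
  unfold cmodelP
  refine pullCLM_ext _ _ ?_
  rw [decodeP_eq_dmap, cmap_dmap]

theorem cmodel_isTCK (e0 : J ≃ SPath s r v) :
    IsTCK s r (cmodelP v e0) (cmodelS v e0) := by
  refine ⟨?_, ?_, ?_, ?_, ?_⟩
  · intro w
    unfold cmodelP
    rw [adjoint_pullCLM]
    refine pullCLM_ext _ _ ?_
    rw [cmap_pinv e0 e0 (decodeP_inj v w), pinv_decodeP]
  · intro w
    unfold cmodelP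
    rw [pullCLM_comp]
    refine pullCLM_ext _ _ ?_
    rw [← cmap_ocomp e0 e0 e0]
    refine congrArg (cmap e0 e0) ?_
    rw [decodeP_eq_dmap, ocomp_dmap]
    exact dmap_congr fun k => and_self_iff
  · intro w w' hne
    unfold cmodelP
    rw [pullCLM_comp]
    have hmap : ocomp (cmap e0 e0 (decodeP v w)) (cmap e0 e0 (decodeP v w')) =
        fun _ : J => (none : Option J) := by
      rw [← cmap_ocomp e0 e0 e0]
      funext k
      unfold cmap
      have hz : ocomp (decodeP v w) (decodeP v w') (e0 k) = none := by
        rw [decodeP_eq_dmap, decodeP_eq_dmap, ocomp_dmap]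
        unfold dmap
        rw [if_neg]
        rintro ⟨h1, h2⟩
        exact hne (h1.symm.trans h2)
      rw [hz]
      rfl
    have obot_inj : Inj2 (fun _ : J => (none : Option J)) := by
      intro k k' i h1 _
      exact nomatch h1
    exact (pullCLM_ext _ obot_inj hmap).trans pullCLM_obot
  · intro e
    unfold cmodelS cmodelP
    rw [adjoint_pullCLM, pullCLM_comp]
    refine pullCLM_ext _ _ ?_
    rw [cmap_pinv e0 e0 (decodeS_inj v e), ← cmap_ocomp e0 e0 e0, ocomp_pinv_decodeS]
  · intro w F hF
    have hsum : ∑ e ∈ F, cmodelS v e0 e ∘L adjoint (cmodelS v e0 e) =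
        pullCLM (dmap fun k : J => ∃ e ∈ F, (e0 k).1.edges.head? = some e) (dmap_inj _) := by
      rw [Finset.sum_congr rfl (fun e _ => cmodelSS v e0 e)]
      refine sum_pullCLM_dmap F _ ?_
      intro a _ b _ hab k h1 h2
      rw [h1] at h2
      exact hab (Option.some.inj h2)
    rw [hsum, cmodelP_eq, sub_pullCLM_dmap _ _ ?_]
    · exact isPosOp_pullCLM_dmap _
    · rintro k ⟨e, heF, he⟩
      rw [GPath.rng_of_head he]
      exact hF e heF

theorem cmodel_isCK (hv : {e : E | r e = v}.Infinite) (e0 : J ≃ SPath s r v) :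
    IsCK s r (cmodelP v e0) (cmodelS v e0) := by
  refine ⟨cmodel_isTCK v e0, ?_⟩
  intro w hfin _
  rw [Finset.sum_congr rfl (fun e _ => cmodelSS v e0 e), cmodelP_eq]
  rw [sum_pullCLM_dmap hfin.toFinset _ ?_]
  swap
  · intro a _ b _ hab k h1 h2
    rw [h1] at h2
    exact hab (Option.some.inj h2)
  refine pullCLM_ext _ _ (dmap_congr fun k => ?_)
  constructor
  · rintro ⟨e, heF, he⟩
    rw [GPath.rng_of_head he]
    exact (Set.Finite.mem_toFinset hfin).mp heF
  · intro hw
    rcases hq : (e0 k).1.edges with - | ⟨a, t⟩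
    · exfalso
      have hvw : v = w := by
        rw [← hw, GPath.rng_nil_edges hq, (e0 k).2]
      refine hv ?_
      rw [hvw]
      exact hfin
    · have hh : (e0 k).1.edges.head? = some a := by rw [hq]; rfl
      refine ⟨a, ?_, rfl⟩
      rw [Set.Finite.mem_toFinset]
      show r a = w
      rw [← GPath.rng_of_head hh]
      exact hw

end ModelFamily

section DilationModel

variable {V E : Type*} {s r : E → V}

/-- The partial map on paths induced by a word in the generators. -/
def wmap (v : V) : List (V ⊕ E) → SPath s r v → Option (SPath s r v)
  | [] => fun k => some k
  | g :: t => ocomp (Sum.elim (decodeP v) (decodeS v) g) (wmap v t)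

theorem wmap_inj (v : V) (l : List (V ⊕ E)) : Inj2 (wmap (s := s) (r := r) v l) := by
  induction l with
  | nil => exact oid_inj
  | cons g t ih =>
    rcases g with w | e
    · exact ocomp_inj (decodeP_inj v w) ih
    · exact ocomp_inj (decodeS_inj v e) ih

theorem cmodel_prod {v : V} {J : Type*} (e0 : J ≃ SPath s r v) (l : List (V ⊕ E)) :
    (l.map (gen (cmodelP v e0) (cmodelS v e0))).prod =
      pullCLM (cmap e0 e0 (wmap v l)) (cmap_inj e0 e0 (wmap_inj v l)) := by
  induction l with
  | nil =>
    rw [List.map_nil, List.prod_nil]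
    exact ((pullCLM_ext _ oid_inj (cmap_oid e0)).trans pullCLM_oid).symm
  | cons g t ih =>
    rw [List.map_cons, List.prod_cons, ih]
    rcases g with w | e
    · show cmodelP v e0 w * _ = _
      rw [ContinuousLinearMap.mul_def]
      unfold cmodelP
      rw [pullCLM_comp]
      refine pullCLM_ext _ _ ?_
      rw [← cmap_ocomp e0 e0 e0]
      rfl
    · show cmodelS v e0 e * _ = _
      rw [ContinuousLinearMap.mul_def]
      unfold cmodelS
      rw [pullCLM_comp]
      refine pullCLM_ext _ _ ?_
      rw [← cmap_ocomp e0 e0 e0]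
      rfl

/-- Append the fixed edge `f` to the end of a path with source `r f`. -/
def snocP (f : E) {v₀ : V} (hf : r f = v₀) (p : SPath s r v₀) : SPath s r (s f) :=
  ⟨{ src := s f
     edges := p.1.edges ++ [f]
     chain := by
       refine List.isChain_append.mpr ⟨p.1.chain, List.isChain_singleton f, ?_⟩
       intro x hx y hy
       have hyf : f = y := by simpa using hy
       subst hyf
       rw [hf, p.1.src_eq x hx]
       exact p.2
     src_eq := by
       intro x hx
       have hxf : f = x := by
         rw [List.getLast?_concat] at hx
         simpa using hx
       rw [← hxf] }, rfl⟩

theorem snocP_inj (f : E) {v₀ : V} (hf : r f = v₀) :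
    Inj2 (fun p : SPath s r v₀ => some (snocP f hf p)) := by
  intro p q i h1 h2
  have h := Option.some.inj (h1.trans h2.symm)
  have he : p.1.edges ++ [f] = q.1.edges ++ [f] :=
    congrArg (fun z : SPath s r (s f) => z.1.edges) h
  have he' : p.1.edges = q.1.edges := List.append_left_injective [f] he
  exact Subtype.ext (GPath.ext' (p.2.trans q.2.symm) he')

theorem snocP_edges (f : E) {v₀ : V} (hf : r f = v₀) (p : SPath s r v₀) :
    (snocP f hf p).1.edges = p.1.edges ++ [f] := rfl

theorem rng_snocP (f : E) {v₀ : V} (hf : r f = v₀) (p : SPath s r v₀) :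
    (snocP f hf p).1.rng = p.1.rng := by
  rcases hq : p.1.edges with - | ⟨a, t⟩
  · have h1 : (snocP f hf p).1.edges.head? = some f := by
      rw [snocP_edges, hq]
      rfl
    rw [GPath.rng_of_head h1, GPath.rng_nil_edges hq, p.2]
    exact hf
  · have h1 : (snocP f hf p).1.edges.head? = some a := by
      rw [snocP_edges, hq]
      rfl
    rw [GPath.rng_of_head h1, GPath.rng_of_head (show p.1.edges.head? = some a by rw [hq]; rfl)]

theorem wmap_nil_strip (f : E) {v₀ : V} (hf : r f = v₀) (l : List (V ⊕ E)) :
    (wmap (s f) l (⟨GPath.nil s r (s f), rfl⟩ : SPath s r (s f))).bind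
      (pinv fun p : SPath s r v₀ => some (snocP f hf p)) = none := by
  induction l with
  | nil =>
    show pinv (fun p : SPath s r v₀ => some (snocP f hf p)) _ = none
    refine pinv_eq_none_iff.mpr fun p hp => ?_
    have h := Option.some.inj hp
    have he : p.1.edges ++ [f] = [] :=
      congrArg (fun z : SPath s r (s f) => z.1.edges) h
    simp at he
  | cons g t ih =>
    rcases g with w | e
    · show ((decodeP (s f) w _).bind (wmap (s f) t)).bind _ = none
      unfold decodeP
      split_ifs with hc
      · exact ih
      · rfl
    · show ((decodeS (s f) e (⟨GPath.nil s r (s f), rfl⟩ : SPath s r (s f))).bind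
          (wmap (s f) t)).bind (pinv fun p : SPath s r v₀ => some (snocP f hf p)) = none
      unfold decodeS
      split_ifs with hc
      · exfalso
        have : (GPath.nil s r (s f)).edges.head? = (none : Option E) := rfl
        rw [this] at hc
        exact nomatch hc
      · rfl

theorem wmap_snoc_strip (f : E) {v₀ : V} (hf : r f = v₀) (l : List (V ⊕ E))
    (p : SPath s r v₀) :
    (wmap (s f) l (snocP f hf p)).bind
        (pinv fun q : SPath s r v₀ => some (snocP f hf q)) = wmap v₀ l p := by
  induction l generalizing p with
  | nil =>
    show pinv (fun q : SPath s r v₀ => some (snocP f hf q)) (snocP f hf p) = some p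
    exact (pinv_eq_some_iff (snocP_inj f hf)).mpr rfl
  | cons g t ih =>
    rcases g with w | e
    · show ((decodeP (s f) w (snocP f hf p)).bind (wmap (s f) t)).bind _ =
        (decodeP v₀ w p).bind (wmap v₀ t)
      unfold decodeP
      by_cases hc : p.1.rng = w
      · rw [if_pos (by rw [rng_snocP f hf p]; exact hc), if_pos hc]
        exact ih p
      · rw [if_neg (by rw [rng_snocP f hf p]; exact hc), if_neg hc]
        rfl
    · show ((decodeS (s f) e (snocP f hf p)).bind (wmap (s f) t)).bind _ =
        (decodeS v₀ e p).bind (wmap v₀ t)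
      unfold decodeS
      rcases hq : p.1.edges with - | ⟨a, t'⟩
      · have hhead : (snocP f hf p).1.edges.head? = some f := by
          rw [snocP_edges, hq]
          rfl
        by_cases hef : f = e
        · subst hef
          rw [if_pos hhead, if_neg (fun hcon => nomatch hcon)]
          have htail : (⟨(snocP f hf p).1.tail, (snocP f hf p).2⟩ : SPath s r (s f)) =
              ⟨GPath.nil s r (s f), rfl⟩ := by
            refine Subtype.ext (GPath.ext' rfl ?_)
            show (p.1.edges ++ [f]).tail = []
            rw [hq]
            rfl
          rw [htail]
          exact wmap_nil_strip f hf t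
        · rw [if_neg (by rw [hhead]; exact fun hcon => hef (Option.some.inj hcon)),
            if_neg (fun hcon => nomatch hcon)]
          rfl
      · have hhead : (snocP f hf p).1.edges.head? = some a := by
          rw [snocP_edges, hq]
          rfl
        by_cases hae : a = e
        · subst hae
          rw [if_pos hhead, if_pos (show (a :: t').head? = some a from rfl)]
          have htail : (⟨(snocP f hf p).1.tail, (snocP f hf p).2⟩ : SPath s r (s f)) =
              snocP f hf ⟨p.1.tail, p.2⟩ := by
            refine Subtype.ext (GPath.ext' rfl ?_)
            show (p.1.edges ++ [f]).tail = p.1.edges.tail ++ [f]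
            rw [hq]
            rfl
          rw [htail]
          exact ih ⟨p.1.tail, p.2⟩
        · rw [if_neg (by rw [hhead]; exact fun hcon => hae (Option.some.inj hcon)),
            if_neg (show ¬(a :: t').head? = some e from fun hcon => hae (Option.some.inj hcon))]
          rfl

theorem ocomp_assoc {ι κ μ ν : Type*} (f : κ → Option ι) (g : ι → Option μ)
    (h : μ → Option ν) : ocomp (ocomp f g) h = ocomp f (ocomp g h) := by
  funext k
  unfold ocomp
  rcases f k with - | i <;> simp

theorem cmap_sandwich {ι κ ι' κ' : Type*} (a : ι' ≃ ι) (b : κ' ≃ κ)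
    (Wm : κ → Option ι) (Am : κ → Option κ) (hW : Inj2 Wm) :
    ocomp (pinv (cmap b a Wm)) (ocomp (cmap b b Am) (cmap b a Wm))
      = cmap a a (ocomp (pinv Wm) (ocomp Am Wm)) := by
  rw [cmap_pinv b a hW, ← cmap_ocomp b b a Am Wm, ← cmap_ocomp a b a (pinv Wm) (ocomp Am Wm)]

theorem gpath_countable {V E : Type*} [Countable V] [Countable E] (s r : E → V) :
    Countable (GPath s r) := by
  have hinj : Function.Injective (fun p : GPath s r => (p.src, p.edges)) := by
    intro p q h
    exact GPath.ext' (congrArg Prod.fst h) (congrArg Prod.snd h)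
  exact hinj.countable

end DilationModel

section Forward

universe u

set_option maxHeartbeats 1000000 in
theorem isMaxTCK_of_rowFinite {V E : Type*} {s r : E → V}
    (hrow : ∀ v : V, {e : E | r e = v}.Finite)
    {H : Type u} [NormedAddCommGroup H] [InnerProductSpace ℂ H] [CompleteSpace H]
    {P : V → H →L[ℂ] H} {S : E → H →L[ℂ] H} (hCK : IsCK s r P S) :
    IsMaxTCK s r P S := by
  intro K _ _ _ Q T W hQT hdil
  obtain ⟨hWn, hword⟩ := hdil
  have hWi : ∀ a b : H, (inner ℂ (W a) (W b) : ℂ) = inner ℂ a b := fun a b =>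
    LinearIsometry.inner_map_map ⟨(W : H →ₗ[ℂ] K), hWn⟩ a b
  have h1 : ∀ g : V ⊕ E, adjoint W ∘L gen Q T g ∘L W = gen P S g := by
    intro g
    have hw := hword [g] (by simp)
    rwa [List.map_cons, List.map_nil, List.prod_cons, List.prod_nil, mul_one] at hw
  have hword2 : ∀ g g' : V ⊕ E,
      adjoint W ∘L (gen Q T g ∘L gen Q T g') ∘L W = gen P S g ∘L gen P S g' := by
    intro g g'
    have hw := hword [g, g'] (by simp)
    simp only [List.map_cons, List.map_nil, List.prod_cons, List.prod_nil, mul_one,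
      ContinuousLinearMap.mul_def] at hw
    exact hw
  have key : ∀ (A : K →L[ℂ] K) (B : H →L[ℂ] H),
      adjoint W ∘L A ∘L W = B →
      adjoint W ∘L (adjoint A ∘L A) ∘L W = adjoint B ∘L B →
      ∀ x : H, A (W x) = W (B x) := by
    intro A B hA hAA x
    have hApp1 : adjoint W (A (W x)) = B x := congrArg (fun M : H →L[ℂ] H => M x) hA
    have hApp2 : adjoint W ((adjoint A) (A (W x))) = (adjoint B) (B x) :=
      congrArg (fun M : H →L[ℂ] H => M x) hAA
    have hd : (inner ℂ (A (W x) - W (B x)) (A (W x) - W (B x)) : ℂ) = 0 := by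
      rw [inner_sub_sub_self]
      have e1 : (inner ℂ (A (W x)) (A (W x)) : ℂ) = inner ℂ (B x) (B x) := by
        calc (inner ℂ (A (W x)) (A (W x)) : ℂ)
            = inner ℂ (W x) ((adjoint A) (A (W x))) :=
              (ContinuousLinearMap.adjoint_inner_right A (W x) (A (W x))).symm
          _ = inner ℂ x (adjoint W ((adjoint A) (A (W x)))) :=
              (ContinuousLinearMap.adjoint_inner_right W x _).symm
          _ = inner ℂ x ((adjoint B) (B x)) := by rw [hApp2]
          _ = inner ℂ (B x) (B x) := ContinuousLinearMap.adjoint_inner_right B x (B x)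
      have e2 : (inner ℂ (A (W x)) (W (B x)) : ℂ) = inner ℂ (B x) (B x) := by
        calc (inner ℂ (A (W x)) (W (B x)) : ℂ)
            = inner ℂ (adjoint W (A (W x))) (B x) :=
              (ContinuousLinearMap.adjoint_inner_left W (B x) (A (W x))).symm
          _ = inner ℂ (B x) (B x) := by rw [hApp1]
      have e3 : (inner ℂ (W (B x)) (A (W x)) : ℂ) = inner ℂ (B x) (B x) := by
        calc (inner ℂ (W (B x)) (A (W x)) : ℂ)
            = (starRingEnd ℂ) (inner ℂ (A (W x)) (W (B x))) := (inner_conj_symm _ _).symm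
          _ = (starRingEnd ℂ) (inner ℂ (B x) (B x)) := by rw [e2]
          _ = inner ℂ (B x) (B x) := inner_conj_symm _ _
      rw [e1, e2, e3, hWi]
      ring
    exact sub_eq_zero.mp (inner_self_eq_zero.mp hd)
  have hQW : ∀ w (x : H), Q w (W x) = W (P w x) := by
    intro w
    refine key (Q w) (P w) (h1 (Sum.inl w)) ?_
    rw [hQT.1 w, hCK.1.1 w]
    exact hword2 (Sum.inl w) (Sum.inl w)
  have hTW : ∀ e (x : H), T e (W x) = W (S e x) := by
    intro e
    refine key (T e) (S e) (h1 (Sum.inr e)) ?_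
    rw [hQT.2.2.2.1 e, hCK.1.2.2.2.1 e]
    exact h1 (Sum.inl (s e))
  have hWS : ∀ (e' : E) (x : H), adjoint W (adjoint (T e') (W x)) = adjoint (S e') x := by
    intro e' x
    have h := congrArg ContinuousLinearMap.adjoint (h1 (Sum.inr e'))
    rw [ContinuousLinearMap.adjoint_comp, ContinuousLinearMap.adjoint_comp,
      ContinuousLinearMap.adjoint_adjoint] at h
    exact congrArg (fun M : H →L[ℂ] H => M x) h
  have hWcon : ∀ z : K, ‖adjoint W z‖ ≤ ‖z‖ := by
    intro z
    have hWnorm : ‖W‖ ≤ 1 := W.opNorm_le_bound zero_le_one fun y => by rw [hWn y, one_mul]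
    have hadj : ‖adjoint W‖ = ‖W‖ :=
      LinearIsometryEquiv.norm_map ContinuousLinearMap.adjoint W
    calc ‖adjoint W z‖ ≤ ‖adjoint W‖ * ‖z‖ := (adjoint W).le_opNorm z
      _ ≤ 1 * ‖z‖ := by
        refine mul_le_mul_of_nonneg_right ?_ (norm_nonneg z)
        rw [hadj]
        exact hWnorm
      _ = ‖z‖ := one_mul ‖z‖
  have haTW : ∀ (e : E) (x : H), adjoint (T e) (W x) = W (adjoint (S e) x) := by
    intro e x
    have hmemF : ∀ e', e' ∈ (hrow (r e)).toFinset ↔ r e' = r e := fun e' =>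
      Set.Finite.mem_toFinset _
    have hba : ∀ e' ∈ (hrow (r e)).toFinset,
        ‖adjoint (S e') x‖^2 ≤ ‖adjoint (T e') (W x)‖^2 := by
      intro e' _
      have hle : ‖adjoint (S e') x‖ ≤ ‖adjoint (T e') (W x)‖ := by
        rw [← hWS e' x]
        exact hWcon _
      nlinarith [norm_nonneg (adjoint (T e') (W x)), norm_nonneg (adjoint (S e') x)]
    have hpos := hQT.2.2.2.2 (r e) (hrow (r e)).toFinset (fun e' he' => (hmemF e').mp he')
    have hCKsum := hCK.2 (r e) (hrow (r e)) ⟨e, (hmemF e).mpr rfl⟩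
    have hLsum : (inner ℂ ((∑ e' ∈ (hrow (r e)).toFinset, T e' ∘L adjoint (T e')) (W x))
          (W x) : ℂ)
        = ((∑ e' ∈ (hrow (r e)).toFinset, ‖adjoint (T e') (W x)‖^2 : ℝ) : ℂ) := by
      rw [ContinuousLinearMap.sum_apply, sum_inner]
      push_cast
      refine Finset.sum_congr rfl fun e' _ => ?_
      simp only [ContinuousLinearMap.coe_comp', Function.comp_apply]
      rw [← ContinuousLinearMap.adjoint_inner_right (T e'), inner_self_eq_norm_sq_to_K]
      norm_cast
    have hRsum : (inner ℂ (Q (r e) (W x)) (W x) : ℂ)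
        = ((∑ e' ∈ (hrow (r e)).toFinset, ‖adjoint (S e') x‖^2 : ℝ) : ℂ) := by
      rw [hQW (r e) x, hWi, ← hCKsum, ContinuousLinearMap.sum_apply, sum_inner]
      push_cast
      refine Finset.sum_congr rfl fun e' _ => ?_
      simp only [ContinuousLinearMap.coe_comp', Function.comp_apply]
      rw [← ContinuousLinearMap.adjoint_inner_right (S e'), inner_self_eq_norm_sq_to_K]
      norm_cast
    have hple := hpos (W x)
    rw [ContinuousLinearMap.sub_apply, inner_sub_left, hLsum, hRsum] at hple
    have hsumle : ∑ e' ∈ (hrow (r e)).toFinset, ‖adjoint (T e') (W x)‖^2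
        ≤ ∑ e' ∈ (hrow (r e)).toFinset, ‖adjoint (S e') x‖^2 := by
      have hre := (Complex.le_def.mp hple).1
      simp only [Complex.zero_re, Complex.sub_re, Complex.ofReal_re] at hre
      linarith
    have hab : ‖adjoint (S e) x‖^2 = ‖adjoint (T e) (W x)‖^2 :=
      (Finset.sum_eq_sum_iff_of_le hba).mp
        (le_antisymm (Finset.sum_le_sum hba) hsumle) e ((hmemF e).mpr rfl)
    have hnorm_eq : (inner ℂ (adjoint (T e) (W x)) (adjoint (T e) (W x)) : ℂ)
        = inner ℂ (adjoint (S e) x) (adjoint (S e) x) := by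
      rw [inner_self_eq_norm_sq_to_K, inner_self_eq_norm_sq_to_K]
      norm_cast
      exact hab.symm
    have hd : (inner ℂ (adjoint (T e) (W x) - W (adjoint (S e) x))
        (adjoint (T e) (W x) - W (adjoint (S e) x)) : ℂ) = 0 := by
      rw [inner_sub_sub_self]
      have e2 : (inner ℂ (adjoint (T e) (W x)) (W (adjoint (S e) x)) : ℂ)
          = inner ℂ (adjoint (S e) x) (adjoint (S e) x) := by
        calc (inner ℂ (adjoint (T e) (W x)) (W (adjoint (S e) x)) : ℂ)
            = inner ℂ (adjoint W (adjoint (T e) (W x))) (adjoint (S e) x) :=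
              (ContinuousLinearMap.adjoint_inner_left W _ _).symm
          _ = inner ℂ (adjoint (S e) x) (adjoint (S e) x) := by rw [hWS e x]
      have e3 : (inner ℂ (W (adjoint (S e) x)) (adjoint (T e) (W x)) : ℂ)
          = inner ℂ (adjoint (S e) x) (adjoint (S e) x) := by
        calc (inner ℂ (W (adjoint (S e) x)) (adjoint (T e) (W x)) : ℂ)
            = (starRingEnd ℂ) (inner ℂ (adjoint (T e) (W x)) (W (adjoint (S e) x))) :=
              (inner_conj_symm _ _).symm
          _ = (starRingEnd ℂ) (inner ℂ (adjoint (S e) x) (adjoint (S e) x)) := by rw [e2]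
          _ = inner ℂ (adjoint (S e) x) (adjoint (S e) x) := inner_conj_symm _ _
      rw [hnorm_eq, e2, e3, hWi]
      ring
    exact sub_eq_zero.mp (inner_self_eq_zero.mp hd)
  intro g x
  rcases g with w | e
  · refine ⟨⟨P w x, (hQW w x).symm⟩, ?_⟩
    have hadjg : adjoint (gen Q T (Sum.inl w)) = gen Q T (Sum.inl w) := hQT.1 w
    rw [hadjg]
    exact ⟨P w x, (hQW w x).symm⟩
  · exact ⟨⟨S e x, (hTW e x).symm⟩, ⟨adjoint (S e) x, (haTW e x).symm⟩⟩

end Forward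

section Reverse

universe u

theorem not_maxTCK_of_infinite_receiver {V E : Type*} {s r : E → V} {v₀ : V}
    (hv : {e : E | r e = v₀}.Infinite) {f : E} (hf : r f = v₀)
    {J0 J1 : Type u} (e₀ : J0 ≃ SPath s r v₀) (e₁ : J1 ≃ SPath s r (s f))
    (hmax : IsMaxTCK s r (cmodelP v₀ e₀) (cmodelS v₀ e₀)) : False := by
  have hWWone : adjoint (pullCLM (cmap e₁ e₀ (pinv fun p : SPath s r v₀ => some (snocP f hf p)))
        (cmap_inj e₁ e₀ (pinv_inj _)))
      ∘L pullCLM (cmap e₁ e₀ (pinv fun p : SPath s r v₀ => some (snocP f hf p)))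
        (cmap_inj e₁ e₀ (pinv_inj _)) = 1 := by
    rw [adjoint_pullCLM, pullCLM_comp]
    refine (pullCLM_ext _ oid_inj ?_).trans pullCLM_oid
    have hid : ocomp (pinv (pinv fun p : SPath s r v₀ => some (snocP f hf p)))
        (pinv fun p : SPath s r v₀ => some (snocP f hf p))
        = (fun p : SPath s r v₀ => some p) := by
      funext p
      show (pinv (pinv fun q : SPath s r v₀ => some (snocP f hf q)) p).bind
        (pinv fun q : SPath s r v₀ => some (snocP f hf q)) = some p
      rw [pinv_pinv (snocP_inj f hf)]
      exact (pinv_eq_some_iff (snocP_inj f hf)).mpr rfl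
    rw [cmap_pinv e₁ e₀ (pinv_inj _),
      ← cmap_ocomp e₀ e₁ e₀ (pinv (pinv fun p : SPath s r v₀ => some (snocP f hf p)))
        (pinv fun p : SPath s r v₀ => some (snocP f hf p)), hid, cmap_oid]
  have hdil : Dilates (cmodelP v₀ e₀) (cmodelS v₀ e₀) (cmodelP (s f) e₁) (cmodelS (s f) e₁)
      (pullCLM (cmap e₁ e₀ (pinv fun p : SPath s r v₀ => some (snocP f hf p)))
        (cmap_inj e₁ e₀ (pinv_inj _))) := by
    constructor
    · intro x
      have h1 : (inner ℂ (pullCLM (cmap e₁ e₀ (pinv fun p : SPath s r v₀ => some (snocP f hf p)))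
            (cmap_inj e₁ e₀ (pinv_inj _)) x)
          (pullCLM (cmap e₁ e₀ (pinv fun p : SPath s r v₀ => some (snocP f hf p)))
            (cmap_inj e₁ e₀ (pinv_inj _)) x) : ℂ) = inner ℂ x x := by
        calc (inner ℂ (pullCLM (cmap e₁ e₀ (pinv fun p : SPath s r v₀ => some (snocP f hf p)))
              (cmap_inj e₁ e₀ (pinv_inj _)) x)
            (pullCLM (cmap e₁ e₀ (pinv fun p : SPath s r v₀ => some (snocP f hf p)))
              (cmap_inj e₁ e₀ (pinv_inj _)) x) : ℂ)
            = inner ℂ x ((adjoint (pullCLM (cmap e₁ e₀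
                  (pinv fun p : SPath s r v₀ => some (snocP f hf p)))
                (cmap_inj e₁ e₀ (pinv_inj _))) ∘L
                pullCLM (cmap e₁ e₀ (pinv fun p : SPath s r v₀ => some (snocP f hf p)))
                (cmap_inj e₁ e₀ (pinv_inj _))) x) :=
              (ContinuousLinearMap.adjoint_inner_right _ x _).symm
          _ = inner ℂ x x := by rw [hWWone]; rfl
      have h2 : ‖pullCLM (cmap e₁ e₀ (pinv fun p : SPath s r v₀ => some (snocP f hf p)))
            (cmap_inj e₁ e₀ (pinv_inj _)) x‖^2 = ‖x‖^2 := by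
        rw [inner_self_eq_norm_sq_to_K, inner_self_eq_norm_sq_to_K] at h1
        exact_mod_cast h1
      calc ‖pullCLM (cmap e₁ e₀ (pinv fun p : SPath s r v₀ => some (snocP f hf p)))
            (cmap_inj e₁ e₀ (pinv_inj _)) x‖
          = Real.sqrt (‖pullCLM (cmap e₁ e₀ (pinv fun p : SPath s r v₀ => some (snocP f hf p)))
            (cmap_inj e₁ e₀ (pinv_inj _)) x‖^2) := (Real.sqrt_sq (norm_nonneg _)).symm
        _ = Real.sqrt (‖x‖^2) := by rw [h2]
        _ = ‖x‖ := Real.sqrt_sq (norm_nonneg _)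
    · intro l _
      rw [cmodel_prod e₁ l, cmodel_prod e₀ l, adjoint_pullCLM, pullCLM_comp, pullCLM_comp]
      refine pullCLM_ext _ _ ?_
      rw [cmap_sandwich e₀ e₁ _ (wmap (s f) l) (pinv_inj _)]
      refine congrArg (cmap e₀ e₀) ?_
      funext p
      show ((pinv (pinv fun q : SPath s r v₀ => some (snocP f hf q)) p).bind
        (ocomp (wmap (s f) l) (pinv fun q : SPath s r v₀ => some (snocP f hf q)))) =
        wmap v₀ l p
      rw [pinv_pinv (snocP_inj f hf)]
      exact wmap_snoc_strip f hf l p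
  obtain ⟨y, hy⟩ := (hmax (lp (fun _ : J1 => ℂ) 2) (cmodelP (s f) e₁) (cmodelS (s f) e₁)
    (pullCLM (cmap e₁ e₀ (pinv fun p : SPath s r v₀ => some (snocP f hf p)))
      (cmap_inj e₁ e₀ (pinv_inj _)))
    (cmodel_isTCK (s f) e₁) hdil (Sum.inr f)
    (lp.single 2 (e₀.symm ⟨GPath.nil s r v₀, rfl⟩) 1)).2
  -- coordinate at the empty path of the big space
  have hstrip_nil : pinv (fun p : SPath s r v₀ => some (snocP f hf p))
      (⟨GPath.nil s r (s f), rfl⟩ : SPath s r (s f)) = none := by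
    refine pinv_eq_none_iff.mpr fun p hp => ?_
    have h := Option.some.inj hp
    have he : p.1.edges ++ [f] = [] := congrArg (fun z : SPath s r (s f) => z.1.edges) h
    simp at he
  have hL : (pullCLM (cmap e₁ e₀ (pinv fun p : SPath s r v₀ => some (snocP f hf p)))
      (cmap_inj e₁ e₀ (pinv_inj _)) y) (e₁.symm ⟨GPath.nil s r (s f), rfl⟩) = 0 := by
    rw [pullCLM_apply]
    have hz : cmap e₁ e₀ (pinv fun p : SPath s r v₀ => some (snocP f hf p))
        (e₁.symm ⟨GPath.nil s r (s f), rfl⟩) = none := by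
      unfold cmap
      rw [Equiv.apply_symm_apply, hstrip_nil]
      rfl
    rw [hz]
    rfl
  have hconsnil : s f = (GPath.nil s r (s f)).rng := (GPath.rng_nil_edges (p := GPath.nil s r (s f)) rfl).symm
  have hpinvS : pinv (decodeS (s f) f) (⟨GPath.nil s r (s f), rfl⟩ : SPath s r (s f))
      = some ⟨GPath.cons f (GPath.nil s r (s f)) hconsnil, rfl⟩ := by
    rw [pinv_decodeS]
    dsimp only
    rw [dif_pos hconsnil]
  have hconseq : (⟨GPath.cons f (GPath.nil s r (s f)) hconsnil, rfl⟩ : SPath s r (s f))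
      = snocP f hf ⟨GPath.nil s r v₀, rfl⟩ :=
    Subtype.ext (GPath.ext' rfl rfl)
  have hR : (adjoint (gen (cmodelP (s f) e₁) (cmodelS (s f) e₁) (Sum.inr f))
      (pullCLM (cmap e₁ e₀ (pinv fun p : SPath s r v₀ => some (snocP f hf p)))
        (cmap_inj e₁ e₀ (pinv_inj _)) (lp.single 2 (e₀.symm ⟨GPath.nil s r v₀, rfl⟩) 1)))
      (e₁.symm ⟨GPath.nil s r (s f), rfl⟩) = 1 := by
    show (adjoint (cmodelS (s f) e₁ f) _) _ = 1
    unfold cmodelS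
    rw [adjoint_pullCLM, pullCLM_apply]
    have hm : pinv (cmap e₁ e₁ (decodeS (s f) f)) (e₁.symm ⟨GPath.nil s r (s f), rfl⟩)
        = some (e₁.symm (snocP f hf ⟨GPath.nil s r v₀, rfl⟩)) := by
      rw [cmap_pinv e₁ e₁ (decodeS_inj (s f) f)]
      unfold cmap
      rw [Equiv.apply_symm_apply, hpinvS, hconseq]
      rfl
    rw [hm]
    show (pullCLM (cmap e₁ e₀ (pinv fun p : SPath s r v₀ => some (snocP f hf p)))
        (cmap_inj e₁ e₀ (pinv_inj _)) (lp.single 2 (e₀.symm ⟨GPath.nil s r v₀, rfl⟩) 1))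
      (e₁.symm (snocP f hf ⟨GPath.nil s r v₀, rfl⟩)) = 1
    rw [pullCLM_apply]
    have hm2 : cmap e₁ e₀ (pinv fun p : SPath s r v₀ => some (snocP f hf p))
        (e₁.symm (snocP f hf ⟨GPath.nil s r v₀, rfl⟩))
        = some (e₀.symm ⟨GPath.nil s r v₀, rfl⟩) := by
      unfold cmap
      rw [Equiv.apply_symm_apply, (pinv_eq_some_iff (snocP_inj f hf)).mpr rfl]
      rfl
    rw [hm2]
    simp [lp.single_apply]
  have hcoord : (pullCLM (cmap e₁ e₀ (pinv fun p : SPath s r v₀ => some (snocP f hf p)))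
      (cmap_inj e₁ e₀ (pinv_inj _)) y) (e₁.symm ⟨GPath.nil s r (s f), rfl⟩)
      = (adjoint (gen (cmodelP (s f) e₁) (cmodelS (s f) e₁) (Sum.inr f))
      (pullCLM (cmap e₁ e₀ (pinv fun p : SPath s r v₀ => some (snocP f hf p)))
        (cmap_inj e₁ e₀ (pinv_inj _)) (lp.single 2 (e₀.symm ⟨GPath.nil s r v₀, rfl⟩) 1)))
      (e₁.symm ⟨GPath.nil s r (s f), rfl⟩) := by
    rw [hy]
  rw [hL, hR] at hcoord
  exact zero_ne_one hcoord

end Reverse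

/-- A countable directed graph is row-finite if and only if every
Cuntz-Krieger family for it (on any complex Hilbert space) is maximal. -/
theorem statement_12 {V E : Type*} [Countable V] [Countable E] (s r : E → V) :
    (∀ v : V, {e : E | r e = v}.Finite) ↔
      ∀ (H : Type u) [NormedAddCommGroup H] [InnerProductSpace ℂ H] [CompleteSpace H],
        ∀ (P : V → H →L[ℂ] H) (S : E → H →L[ℂ] H),
          IsCK s r P S → IsMaxTCK s r P S := by
  constructor
  · intro hrow H _ _ _ P S hCK
    exact isMaxTCK_of_rowFinite hrow hCK
  · intro hall v₀
    by_contra hinf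
    have hv : {e : E | r e = v₀}.Infinite := hinf
    obtain ⟨f, hfmem⟩ := hv.nonempty
    have hf : r f = v₀ := hfmem
    haveI : Countable (GPath s r) := gpath_countable s r
    obtain ⟨i0, hi0⟩ := exists_injective_nat (SPath s r v₀)
    obtain ⟨i1, hi1⟩ := exists_injective_nat (SPath s r (s f))
    exact not_maxTCK_of_infinite_receiver hv hf
      (Equiv.ulift.trans (Equiv.ofInjective i0 hi0).symm)
      (Equiv.ulift.trans (Equiv.ofInjective i1 hi1).symm)
      (hall _ _ _ (cmodel_isCK v₀ hv (Equiv.ulift.trans (Equiv.ofInjective i0 hi0).symm)))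

end GraphPaper
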